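/- Let p ≥ 2 be an integer. For every complex number c in the Multibrot set M^p, one has |c| ≤ 2^(1/(p−1)). -/

import Mathlib

theorem multibrot_bounded_by_radius (p : ℕ) (hp : 2 ≤ p) (c : ℂ)
    (hc : ∃ M : ℝ, ∀ m : ℕ, 1 ≤ m → ‖(fun z : ℂ => z ^ p + c)^[m] 0‖ ≤ M) :
    ‖c‖ ≤ (2 : ℝ) ^ ((1 : ℝ) / ((p : ℝ) - 1)) := by
  by_contra hlt
  push_neg at hlt
  obtain ⟨M, hM⟩ := hc
  set f := fun z : ℂ => z ^ p + c with hf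
  set r := ‖c‖ with hr
  have hpR : (1:ℝ) ≤ (p:ℝ) - 1 := by
    have : (2:ℝ) ≤ (p:ℝ) := by exact_mod_cast hp
    linarith
  have h2pos : (0:ℝ) < 2 := by norm_num
  have hbase1 : (1:ℝ) ≤ (2:ℝ) ^ ((1 : ℝ) / ((p : ℝ) - 1)) := by
    apply Real.one_le_rpow (by norm_num)
    positivity
  have hr1 : (1:ℝ) < r := lt_of_le_of_lt hbase1 hlt
  have hr0 : (0:ℝ) < r := by linarith
  have hcast : ((p - 1 : ℕ) : ℝ) = (p:ℝ) - 1 := by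
    have : 1 ≤ p := by omega
    push_cast [this]; ring
  have hpow : (2:ℝ) < r ^ (p - 1) := by
    have h1 : ((2:ℝ) ^ ((1 : ℝ) / ((p : ℝ) - 1))) ^ (p - 1 : ℕ) < r ^ (p - 1 : ℕ) := by
      apply pow_lt_pow_left₀ hlt (by positivity)
      omega
    have h2 : ((2:ℝ) ^ ((1 : ℝ) / ((p : ℝ) - 1))) ^ (p - 1 : ℕ) = 2 := by
      rw [← Real.rpow_natCast ((2:ℝ) ^ ((1 : ℝ) / ((p : ℝ) - 1))) (p-1),
        ← Real.rpow_mul (le_of_lt h2pos), hcast]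
      rw [one_div, inv_mul_cancel₀ (by linarith), Real.rpow_one]
    linarith [h1, h2.ge]
  set q := r ^ (p - 1) - 1 with hqdef
  have hq : (1:ℝ) < q := by simp only [hqdef]; linarith
  have hq0 : (0:ℝ) < q := by linarith
  have key : ∀ m, 1 ≤ m → r * q ^ (m - 1) ≤ ‖f^[m] 0‖ := by
    intro m hm
    induction m with
    | zero => omega
    | succ n ih =>
      rcases Nat.eq_or_lt_of_le hm with h1 | h1
      · simp only [← h1]
        rw [hf]
        simp only [Function.iterate_one]
        rw [zero_pow (by omega : p ≠ 0), zero_add]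
        simp [hr]
      · have hn1 : 1 ≤ n := by omega
        have ihn := ih hn1
        set z := f^[n] 0 with hz
        have hiter : f^[n + 1] 0 = f z := by
          rw [Function.iterate_succ_apply']
        have hzr : r ≤ ‖z‖ := by
          have : (1:ℝ) ≤ q ^ (n - 1) := one_le_pow₀ hq.le
          nlinarith
        have habs0 : (0:ℝ) ≤ ‖z‖ := norm_nonneg _
        have hstep : ‖z‖ * q ≤ ‖f z‖ := by
          have h1 : ‖z‖ ^ p - r ≤ ‖f z‖ := by
            have h := norm_add_le (z ^ p + c) (-c)
            simp only [add_neg_cancel_right, norm_neg] at h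
            simp only [hf, norm_pow] at h ⊢
            linarith
          have h2 : ‖z‖ * r ^ (p - 1) ≤ ‖z‖ ^ p := by
            have : r ^ (p - 1) ≤ ‖z‖ ^ (p - 1) :=
              pow_le_pow_left₀ hr0.le hzr _
            calc ‖z‖ * r ^ (p - 1)
                ≤ ‖z‖ * ‖z‖ ^ (p - 1) := by
                  exact mul_le_mul_of_nonneg_left this habs0
              _ = ‖z‖ ^ p := by
                  rw [← pow_succ']
                  congr 1
                  omega
          simp only [hqdef]
          nlinarith
        have hqn : q ^ (n + 1 - 1) = q ^ (n - 1) * q := by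
          have : n + 1 - 1 = (n - 1) + 1 := by omega
          rw [this, pow_succ]
        rw [hiter, hqn]
        calc r * (q ^ (n - 1) * q) = r * q ^ (n - 1) * q := by ring
          _ ≤ ‖z‖ * q := mul_le_mul_of_nonneg_right ihn hq0.le
          _ ≤ ‖f z‖ := hstep
  obtain ⟨n, hn⟩ := pow_unbounded_of_one_lt (M / r) hq
  have h1 := key (n + 1) (by omega)
  have h2 := hM (n + 1) (by omega)
  simp only [Nat.add_sub_cancel] at h1
  have : M < r * q ^ n := by
    rw [div_lt_iff₀ hr0] at hn
    linarith [hn]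
  linarith
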